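/- Fix a horizon M ∈ ℕ and Δ ≥ 0. Let v_m : Bool → ℝ for m = 1,…,M be value functions on the two-element action set {skip, speak} satisfying |v_m(speak) − v_m(skip)| ≤ Δ for every m. Define recursively: R_0(a) = 0; σ_m(a) = max(R_{m−1}(a),0) / (max(R_{m−1}(skip),0) + max(R_{m−1}(speak),0)) if this denominator is positive, and σ_m(a) = 1/2 otherwise; r_m(a) = v_m(a) − (σ_m(skip)·v_m(skip) + σ_m(speak)·v_m(speak)); and R_m(a) = R_{m−1}(a) + r_m(a). Then max(R_M(skip), R_M(speak)) ≤ Δ·√M. -/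
import Mathlib

/-- Positive-part squared growth: `(x+y)₊² ≤ (x₊ + y)²`. -/
lemma tracer_pos_part_sq (x y : ℝ) :
    (max (x + y) 0) ^ 2 ≤ (max x 0 + y) ^ 2 := by
  rcases le_total (x + y) 0 with h | h
  · rw [max_eq_right h]
    simpa using sq_nonneg (max x 0 + y)
  · rw [max_eq_left h]
    have h2 : x ≤ max x 0 := le_max_left _ _
    nlinarith

set_option maxHeartbeats 1600000 in
/-- Lemma 2 (no-regret property of regret matching) for the binary action set
`{skip, speak}` encoded as `Bool` (`false = skip`, `true = speak`): the maximal cumulative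
counterfactual regret after `M` rounds is at most `Δ·√M`. -/
theorem tracer_binary_regret_matching_bound
    (M : ℕ) (Δ : ℝ) (hΔ : 0 ≤ Δ)
    (v σ r R : ℕ → Bool → ℝ)
    (hv : ∀ m, 1 ≤ m → m ≤ M → |v m true - v m false| ≤ Δ)
    (hR0 : ∀ a, R 0 a = 0)
    (hσ : ∀ m, 1 ≤ m → ∀ a, σ m a =
      if 0 < max (R (m - 1) false) 0 + max (R (m - 1) true) 0
      then max (R (m - 1) a) 0 /
        (max (R (m - 1) false) 0 + max (R (m - 1) true) 0)
      else 1 / 2)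
    (hr : ∀ m, 1 ≤ m → ∀ a,
      r m a = v m a - (σ m false * v m false + σ m true * v m true))
    (hRrec : ∀ m, 1 ≤ m → ∀ a, R m a = R (m - 1) a + r m a) :
    max (R M false) (R M true) ≤ Δ * Real.sqrt M := by
  -- Potential function
  have key : ∀ m, m ≤ M →
      (max (R m false) 0) ^ 2 + (max (R m true) 0) ^ 2 ≤ (m : ℝ) * Δ ^ 2 := by
    intro m
    induction m with
    | zero => intro _; simp [hR0]
    | succ n ih =>
      intro hmM
      have hih := ih (Nat.le_of_succ_le hmM)
      have h1 : (1 : ℕ) ≤ n + 1 := Nat.succ_le_succ (Nat.zero_le n)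
      have hsub : n + 1 - 1 = n := rfl
      set P := max (R n false) 0 with hPdef
      set Q := max (R n true) 0 with hQdef
      have hP : 0 ≤ P := le_max_right _ _
      have hQ : 0 ≤ Q := le_max_right _ _
      set sf := σ (n + 1) false with hsfdef
      set st := σ (n + 1) true with hstdef
      have hsf := hσ (n + 1) h1 false
      have hst := hσ (n + 1) h1 true
      rw [hsub] at hsf hst
      -- basic facts about σ
      have hsum : sf + st = 1 := by
        rw [hsfdef, hstdef, hsf, hst]
        split_ifs with h
        · field_simp
        · norm_num
      have hsf0 : 0 ≤ sf := by
        rw [hsfdef, hsf]; split_ifs with h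
        · exact div_nonneg hP (le_of_lt h)
        · norm_num
      have hst0 : 0 ≤ st := by
        rw [hstdef, hst]; split_ifs with h
        · exact div_nonneg hQ (le_of_lt h)
        · norm_num
      have hQP : Q * sf = P * st := by
        rw [hsfdef, hstdef, hsf, hst]
        split_ifs with h
        · ring
        · push_neg at h
          have hP0 : P = 0 := le_antisymm (by linarith) hP
          have hQ0 : Q = 0 := le_antisymm (by linarith) hQ
          rw [hP0, hQ0]
      -- values of instantaneous regret
      have hrf : r (n + 1) false = st * (v (n + 1) false - v (n + 1) true) := by
        rw [hr (n + 1) h1 false]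
        linear_combination (-(v (n + 1) false)) * hsum
      have hrt : r (n + 1) true = sf * (v (n + 1) true - v (n + 1) false) := by
        rw [hr (n + 1) h1 true]
        linear_combination (-(v (n + 1) true)) * hsum
      -- value gap bound
      have hd : |v (n + 1) true - v (n + 1) false| ≤ Δ := hv (n + 1) h1 hmM
      set d := v (n + 1) true - v (n + 1) false with hddef
      have hd2 : d ^ 2 ≤ Δ ^ 2 := by
        have := abs_nonneg d
        nlinarith [sq_abs d]
      -- recursion
      have hRf : R (n + 1) false = R n false + r (n + 1) false := by
        rw [hRrec (n + 1) h1 false, hsub]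
      have hRt : R (n + 1) true = R n true + r (n + 1) true := by
        rw [hRrec (n + 1) h1 true, hsub]
      -- step bound
      have hstep : (max (R (n + 1) false) 0) ^ 2 + (max (R (n + 1) true) 0) ^ 2
          ≤ (max (R n false) 0) ^ 2 + (max (R n true) 0) ^ 2 + Δ ^ 2 := by
        have hf := tracer_pos_part_sq (R n false) (r (n + 1) false)
        have ht := tracer_pos_part_sq (R n true) (r (n + 1) true)
        have hΦn1 : (max (R (n + 1) false) 0) ^ 2 + (max (R (n + 1) true) 0) ^ 2
            ≤ (P + r (n + 1) false) ^ 2 + (Q + r (n + 1) true) ^ 2 := by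
          rw [hRf, hRt]
          exact add_le_add hf ht
        have hrf' : r (n + 1) false = -(st * d) := by rw [hrf]; ring
        have hrt' : r (n + 1) true = sf * d := by rw [hrt]
        rw [hrf', hrt'] at hΦn1
        have hsq : sf ^ 2 + st ^ 2 ≤ 1 := by
          nlinarith [mul_nonneg hsf0 hst0]
        have hmix : (sf ^ 2 + st ^ 2) * d ^ 2 ≤ Δ ^ 2 := by
          nlinarith [mul_nonneg (by linarith : (0:ℝ) ≤ 1 - (sf ^ 2 + st ^ 2)) (sq_nonneg d)]
        have : (P + -(st * d)) ^ 2 + (Q + sf * d) ^ 2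
            ≤ P ^ 2 + Q ^ 2 + Δ ^ 2 := by
          have hcross : 2 * (Q * sf - P * st) * d = 0 := by
            rw [hQP]; ring
          nlinarith [hmix, hcross]
        calc (max (R (n + 1) false) 0) ^ 2 + (max (R (n + 1) true) 0) ^ 2
            ≤ (P + -(st * d)) ^ 2 + (Q + sf * d) ^ 2 := hΦn1
          _ ≤ P ^ 2 + Q ^ 2 + Δ ^ 2 := this
      have hfin : ((n + 1 : ℕ) : ℝ) * Δ ^ 2 = (n : ℝ) * Δ ^ 2 + Δ ^ 2 := by
        push_cast; ring
      rw [hfin]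
      linarith
  -- conclude
  have hΦM := key M le_rfl
  have hbound : ∀ a : Bool, R M a ≤ Δ * Real.sqrt M := by
    intro a
    have hmax : 0 ≤ max (R M a) 0 := le_max_right _ _
    have hsq : (max (R M a) 0) ^ 2 ≤ (M : ℝ) * Δ ^ 2 := by
      rcases a with _ | _
      · have h0 : (max (R M true) 0) ^ 2 ≥ 0 := sq_nonneg _
        linarith
      · have h0 : (max (R M false) 0) ^ 2 ≥ 0 := sq_nonneg _
        linarith
    have h1 : max (R M a) 0 = Real.sqrt ((max (R M a) 0) ^ 2) :=
      (Real.sqrt_sq hmax).symm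
    have h2 : Real.sqrt ((max (R M a) 0) ^ 2) ≤ Real.sqrt ((M : ℝ) * Δ ^ 2) :=
      Real.sqrt_le_sqrt hsq
    have h3 : Real.sqrt ((M : ℝ) * Δ ^ 2) = Δ * Real.sqrt M := by
      rw [Real.sqrt_mul (Nat.cast_nonneg M), Real.sqrt_sq hΔ]; ring
    calc R M a ≤ max (R M a) 0 := le_max_left _ _
      _ ≤ Δ * Real.sqrt M := by rw [h1, ← h3]; exact h2
  exact max_le (hbound false) (hbound true)
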